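/- arXiv:1909.01219 — 3 statements merged into one kernel-verified Lean document; each statement's English description precedes it below -/
import Mathlib

section
/- Let $u_0, u_1$ be positive integers and $\lambda = $ an appropriate Lagrange multiplier. The critical equation $\frac{3u_0 + 2u_1}{p_0} = \lambda(3p_0^2 + 2p_0)$ arising from maximizing $\mathcal{L} = (3u_0 + 2u_1)\log p_0$ subject to $p_0^3 + p_0^2 = 1$ is equivalent to a cubic polynomial equation in $p_0$, which has exactly $3$ complex roots counted with multiplicity; hence the ML degree of $V(y^3 - x^2)$ (with $K_e = 1$) is $3$. -/
open Polynomial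

/- STATEMENT 9: For positive integers u₀, u₁ and a Lagrange multiplier λ ≠ 0,
the critical equation (3u₀ + 2u₁)/p₀ = λ(3p₀² + 2p₀) arising from maximizing
(3u₀ + 2u₁) log p₀ subject to p₀³ + p₀² = 1 is equivalent (for p₀ ≠ 0) to
the cubic λ(3X³ + 2X²) - (3u₀ + 2u₁) = 0, which has exactly 3 complex roots
counted with multiplicity; hence the ML degree of V(y³ - x²) (K_e = 1)
is 3. -/
theorem stmt_9 (u₀ u₁ : ℕ) (hu₀ : 0 < u₀) (hu₁ : 0 < u₁)
    (lam : ℂ) (hlam : lam ≠ 0) :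
    (∀ p₀ : ℂ, p₀ ≠ 0 →
      ((3 * u₀ + 2 * u₁ : ℂ) / p₀ = lam * (3 * p₀ ^ 2 + 2 * p₀) ↔
        (C lam * (3 * X ^ 3 + 2 * X ^ 2) - C (3 * u₀ + 2 * u₁ : ℂ)).IsRoot p₀)) ∧
    (C lam * (3 * X ^ 3 + 2 * X ^ 2) - C (3 * u₀ + 2 * u₁ : ℂ)).degree = 3 ∧
    (C lam * (3 * X ^ 3 + 2 * X ^ 2) - C (3 * u₀ + 2 * u₁ : ℂ)).roots.card = 3 := by
  set p : ℂ[X] := C lam * (3 * X ^ 3 + 2 * X ^ 2) - C (3 * u₀ + 2 * u₁ : ℂ) with hp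
  have hdeg : p.degree = 3 := by
    rw [hp]
    compute_degree!
  have hne : p ≠ 0 := fun h => by simp [h] at hdeg
  refine ⟨?_, hdeg, ?_⟩
  · intro p₀ hp₀
    rw [hp]
    simp only [IsRoot, eval_sub, eval_mul, eval_add, eval_C, eval_pow, eval_X,
      eval_ofNat, sub_eq_zero]
    rw [div_eq_iff hp₀]
    constructor <;> intro h <;> [linear_combination -h; linear_combination -h]
  · have := (Polynomial.splits_iff_card_roots (f := p)).2
    have hs : p.Splits := IsAlgClosed.splits p
    have := (Polynomial.splits_iff_card_roots).1 hs
    rw [this]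
    have : p.natDegree = 3 := natDegree_eq_of_degree_eq_some hdeg
    exact_mod_cast congrArg Nat.cast this
end

section
/- Let $f = \lambda(3p_0^2 + p_1) p_0 - (3u_0 + u_2)$ and $g = \lambda(3p_1^2 + p_0) p_1 - (3u_1 + u_2)$ be the critical equations (cleared of denominators) for the log-likelihood $3u_0 \log p_0 + 3u_1 \log p_1 + u_2 \log(p_0 p_1)$ under the constraint $p_0^3 + p_1^3 + p_0 p_1 = 1$. For generic parameters $u_0, u_1, u_2$ and $\lambda \neq 0$, the resultant $\mathrm{Res}(f, g, p_0)$ is a polynomial of degree $9$ in $p_1$ with nonzero leading coefficient, hence has exactly $9$ complex roots counted with multiplicity. -/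
open Polynomial
set_option maxHeartbeats 1000000

/- STATEMENT 10: With f = λ(3p₀² + p₁)p₀ - (3u₀ + u₂) and
g = λ(3p₁² + p₀)p₁ - (3u₁ + u₂) the cleared critical equations of the
log-likelihood 3u₀ log p₀ + 3u₁ log p₁ + u₂ log (p₀p₁) under the constraint
p₀³ + p₁³ + p₀p₁ = 1, for generic (positive) parameters u₀, u₁, u₂ and
λ ≠ 0, the resultant Res(f, g, p₀) — the determinant of the 4×4 Sylvester
matrix of the paper — is a polynomial of degree 9 in p₁ with nonzero
leading coefficient, hence has exactly 9 complex roots counted with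
multiplicity.  Here p₁ is the polynomial variable X over ℂ. -/
theorem stmt_10 (u₀ u₁ u₂ : ℝ) (hu₀ : 0 < u₀) (hu₁ : 0 < u₁) (hu₂ : 0 < u₂)
    (lam : ℂ) (hlam : lam ≠ 0) :
    (Matrix.det !![C (3 * lam), 0, C lam * X, C (-(3 * (u₀ : ℂ) + u₂));
                   C lam * X, C (3 * lam) * X ^ 3 - C (3 * (u₁ : ℂ) + u₂), 0, 0;
                   0, C lam * X, C (3 * lam) * X ^ 3 - C (3 * (u₁ : ℂ) + u₂), 0;
                   0, 0, C lam * X, C (3 * lam) * X ^ 3 - C (3 * (u₁ : ℂ) + u₂)]).degree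
      = 9 ∧
    (Matrix.det !![C (3 * lam), 0, C lam * X, C (-(3 * (u₀ : ℂ) + u₂));
                   C lam * X, C (3 * lam) * X ^ 3 - C (3 * (u₁ : ℂ) + u₂), 0, 0;
                   0, C lam * X, C (3 * lam) * X ^ 3 - C (3 * (u₁ : ℂ) + u₂), 0;
                   0, 0, C lam * X, C (3 * lam) * X ^ 3 - C (3 * (u₁ : ℂ) + u₂)]).leadingCoeff
      ≠ 0 ∧
    (Matrix.det !![C (3 * lam), 0, C lam * X, C (-(3 * (u₀ : ℂ) + u₂));
                   C lam * X, C (3 * lam) * X ^ 3 - C (3 * (u₁ : ℂ) + u₂), 0, 0;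
                   0, C lam * X, C (3 * lam) * X ^ 3 - C (3 * (u₁ : ℂ) + u₂), 0;
                   0, 0, C lam * X, C (3 * lam) * X ^ 3 - C (3 * (u₁ : ℂ) + u₂)]).roots.card
      = 9 := by
  set a : ℂ := 3 * (u₀ : ℂ) + u₂ with ha
  set c : ℂ := 3 * (u₁ : ℂ) + u₂ with hc
  set P : ℂ[X] := C (81 * lam ^ 4) * X ^ 9 + C (3 * lam ^ 4 - 81 * lam ^ 3 * c) * X ^ 6
      + C (27 * lam ^ 2 * c ^ 2 - lam ^ 3 * c + a * lam ^ 3) * X ^ 3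
      - C (3 * lam * c ^ 3) with hP
  have hdet : (Matrix.det !![C (3 * lam), 0, C lam * X, C (-a);
                   C lam * X, C (3 * lam) * X ^ 3 - C c, 0, 0;
                   0, C lam * X, C (3 * lam) * X ^ 3 - C c, 0;
                   0, 0, C lam * X, C (3 * lam) * X ^ 3 - C c]) = P := by
    simp [Matrix.det_succ_row_zero, Fin.sum_univ_succ, Fin.succAbove, Fin.castSucc, Fin.castAdd, Fin.castLE, Matrix.cons_val_two, Matrix.cons_val_three, Matrix.tail_cons, hP]


    simp only [map_mul, map_add, map_pow, map_neg, map_ofNat]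
    ring
  rw [hdet]
  have hlead : (81 : ℂ) * lam ^ 4 ≠ 0 := by
    simp [hlam]
  have hdeg : P.degree = 9 := by
    rw [hP]
    compute_degree!
  have hne : P ≠ 0 := fun h => by simp [h] at hdeg
  refine ⟨hdeg, leadingCoeff_ne_zero.mpr hne, ?_⟩
  have := (Polynomial.splits_iff_card_roots.mp (IsAlgClosed.splits P))
  rw [this, natDegree_eq_of_degree_eq_some hdeg]
end

section
/- Let $u_0, u_1, u_2 > 0$ and $K > 0$. The constrained critical equations for the log-likelihood $(2u_0 + u_2)\log t_0 + (2u_1 + 3u_2)\log t_1 + u_2 \log\sqrt{K}$ subject to $t_0^2 + t_1^2 + \sqrt{K}\, t_0 t_1^3 = 1$ reduce, via elimination of $t_0$ by a resultant, to a polynomial of degree $8$ in $t_1$ with nonzero leading coefficient; hence the number of complex critical points (counted with multiplicity) is $8$. -/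
open Polynomial

/- STATEMENT 17: For u₀, u₁, u₂ > 0 and K > 0, the cleared Lagrange critical
equations for (2u₀+u₂) log t₀ + (2u₁+3u₂) log t₁ + u₂ log √K subject to
t₀² + t₁² + √K t₀ t₁³ = 1 are
f = 2λt₀² + √K λ t₀ t₁³ - (2u₀+u₂) (a quadratic in t₀) and
g = 3√K λ t₀ t₁³ + 2λt₁² - (2u₁+3u₂) (linear in t₀).
Eliminating t₀ by the resultant (the 3×3 Sylvester determinant) yields a
polynomial of degree 8 in t₁ with nonzero leading coefficient; hence the
number of complex critical points counted with multiplicity is 8.  Here t₁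
is the polynomial variable X over ℂ and λ ≠ 0 is the Lagrange multiplier. -/
theorem stmt_17 (u₀ u₁ u₂ K : ℝ) (hu₀ : 0 < u₀) (hu₁ : 0 < u₁) (hu₂ : 0 < u₂)
    (hK : 0 < K) (lam : ℂ) (hlam : lam ≠ 0) :
    (Matrix.det !![C (2 * lam), C ((Real.sqrt K : ℂ) * lam) * X ^ 3,
                     C (-(2 * (u₀ : ℂ) + u₂));
                   C (3 * (Real.sqrt K : ℂ) * lam) * X ^ 3,
                     C (2 * lam) * X ^ 2 - C (2 * (u₁ : ℂ) + 3 * u₂), 0;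
                   0, C (3 * (Real.sqrt K : ℂ) * lam) * X ^ 3,
                     C (2 * lam) * X ^ 2 - C (2 * (u₁ : ℂ) + 3 * u₂)]).degree = 8 ∧
    (Matrix.det !![C (2 * lam), C ((Real.sqrt K : ℂ) * lam) * X ^ 3,
                     C (-(2 * (u₀ : ℂ) + u₂));
                   C (3 * (Real.sqrt K : ℂ) * lam) * X ^ 3,
                     C (2 * lam) * X ^ 2 - C (2 * (u₁ : ℂ) + 3 * u₂), 0;
                   0, C (3 * (Real.sqrt K : ℂ) * lam) * X ^ 3,
                     C (2 * lam) * X ^ 2 - C (2 * (u₁ : ℂ) + 3 * u₂)]).leadingCoeff ≠ 0 ∧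
    (Matrix.det !![C (2 * lam), C ((Real.sqrt K : ℂ) * lam) * X ^ 3,
                     C (-(2 * (u₀ : ℂ) + u₂));
                   C (3 * (Real.sqrt K : ℂ) * lam) * X ^ 3,
                     C (2 * lam) * X ^ 2 - C (2 * (u₁ : ℂ) + 3 * u₂), 0;
                   0, C (3 * (Real.sqrt K : ℂ) * lam) * X ^ 3,
                     C (2 * lam) * X ^ 2 - C (2 * (u₁ : ℂ) + 3 * u₂)]).roots.card = 8 := by
  have hs : (Real.sqrt K : ℂ) ≠ 0 := by
    simp [Complex.ofReal_ne_zero, Real.sqrt_ne_zero', hK.le, hK.ne']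
  set p := Matrix.det !![C (2 * lam), C ((Real.sqrt K : ℂ) * lam) * X ^ 3,
                     C (-(2 * (u₀ : ℂ) + u₂));
                   C (3 * (Real.sqrt K : ℂ) * lam) * X ^ 3,
                     C (2 * lam) * X ^ 2 - C (2 * (u₁ : ℂ) + 3 * u₂), 0;
                   0, C (3 * (Real.sqrt K : ℂ) * lam) * X ^ 3,
                     C (2 * lam) * X ^ 2 - C (2 * (u₁ : ℂ) + 3 * u₂)] with hp
  have hlead : -(6 * ((Real.sqrt K : ℂ))^2 * lam^3) ≠ 0 := by
    exact neg_ne_zero.mpr (mul_ne_zero (mul_ne_zero (by norm_num) (pow_ne_zero _ hs)) (pow_ne_zero _ hlam))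
  have hdeg : p.degree = 8 := by
    rw [hp, Matrix.det_fin_three]
    norm_num [Matrix.cons_val_zero, Matrix.cons_val_one, Matrix.head_cons,
      Matrix.cons_val_two, Matrix.tail_cons]
    compute_degree!
    all_goals ring_nf
    exact ⟨fun h => hs (by exact_mod_cast congrArg (Complex.ofReal) h), hlam⟩
  have hne : p ≠ 0 := fun h => by simp [h] at hdeg
  refine ⟨hdeg, leadingCoeff_ne_zero.mpr hne, ?_⟩
  have hc := (Polynomial.splits_iff_card_roots).mp (IsAlgClosed.splits p)
  rw [hc, Polynomial.natDegree_eq_of_degree_eq_some hdeg]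
end
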